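/- Let (e_n)_{n≥1} be a sequence of nonnegative random variables adapted to a filtration (F_n) such that E[e_n | F_{n-1}] ≤ 1 almost surely for all n, and suppose the e_n are uniformly bounded by a constant C. Then almost surely limsup_{n→∞} (1/n)∑_{i=1}^n e_i ≤ 1. -/

import Mathlib

open MeasureTheory Filter

open Topology

lemma kronecker_aux {a : ℕ → ℝ} {l : ℝ}
    (h : Tendsto (fun n : ℕ => ∑ i ∈ Finset.Icc 1 n, a i / i) atTop (𝓝 l)) :
    Tendsto (fun n : ℕ => (1 / (n : ℝ)) * ∑ i ∈ Finset.Icc 1 n, a i) atTop (𝓝 0) := by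
  set b : ℕ → ℝ := fun n => ∑ i ∈ Finset.Icc 1 n, a i / i with hb
  have key : ∀ n : ℕ, ∑ i ∈ Finset.Icc 1 n, a i = n * b n - ∑ k ∈ Finset.range n, b k := by
    intro n
    induction n with
    | zero => simp [hb]
    | succ n ih =>
      have hbn : b (n + 1) = b n + a (n + 1) / (n + 1) := by
        simp [hb, Finset.sum_Icc_succ_top (show 1 ≤ n + 1 by omega)]
      have hne : ((n : ℝ) + 1) ≠ 0 := by positivity
      rw [Finset.sum_Icc_succ_top (show 1 ≤ n + 1 by omega), ih, Finset.sum_range_succ, hbn]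
      push_cast
      field_simp
      ring
  have h2 : Tendsto (fun n : ℕ => (n : ℝ)⁻¹ * ∑ k ∈ Finset.range n, b k) atTop (𝓝 l) := h.cesaro
  have h3 : Tendsto (fun n : ℕ => b n - (n : ℝ)⁻¹ * ∑ k ∈ Finset.range n, b k) atTop
      (𝓝 (l - l)) := h.sub h2
  rw [sub_self] at h3
  refine h3.congr' ?_
  filter_upwards [eventually_ge_atTop 1] with n hn
  have hne : (n : ℝ) ≠ 0 := Nat.cast_ne_zero.mpr (by omega)
  rw [key n]
  field_simp

lemma integral_mul_eq_zero_of_condexp_eq_zero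
    {Ω : Type*} {mΩ : MeasurableSpace Ω} {μ : Measure Ω} [IsProbabilityMeasure μ]
    {m : MeasurableSpace Ω} (hm : m ≤ mΩ) {g f : Ω → ℝ}
    (hg : StronglyMeasurable[m] g) (hgf : Integrable (fun ω => g ω * f ω) μ)
    (hf : Integrable f μ) (h : μ[f|m] =ᵐ[μ] 0) :
    ∫ ω, g ω * f ω ∂μ = 0 := by
  have h1 : μ[fun ω => g ω * f ω|m] =ᵐ[μ] fun ω => g ω * (μ[f|m]) ω :=
    condExp_mul_of_stronglyMeasurable_left hg hgf hf
  have h2 : (fun ω => g ω * (μ[f|m]) ω) =ᵐ[μ] fun _ => (0 : ℝ) := by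
    filter_upwards [h] with ω hω
    simp [hω]
  calc ∫ ω, g ω * f ω ∂μ = ∫ ω, (μ[fun ω => g ω * f ω|m]) ω ∂μ := (integral_condExp hm).symm
    _ = ∫ _ω, (0 : ℝ) ∂μ := integral_congr_ae (h1.trans h2)
    _ = 0 := integral_zero _ _

lemma sum_inv_sq_le_two : ∀ n : ℕ, ∑ i ∈ Finset.Icc 1 n, (1 / (i : ℝ) ^ 2) ≤ 2 := by
  have key : ∀ n : ℕ, 1 ≤ n → ∑ i ∈ Finset.Icc 1 n, (1 / (i : ℝ) ^ 2) ≤ 2 - 1 / (n:ℝ) := by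
    intro n
    induction n with
    | zero => omega
    | succ n ih =>
      intro _
      rcases Nat.eq_zero_or_pos n with h0 | h0
      · subst h0; norm_num [Finset.Icc_self]
      · have h1 := ih h0
        have hx : (1 : ℝ) ≤ (n : ℝ) := by exact_mod_cast h0
        have hx0 : (0 : ℝ) < (n : ℝ) := by linarith
        have hx1 : (0 : ℝ) < (n : ℝ) + 1 := by linarith
        rw [Finset.sum_Icc_succ_top (show 1 ≤ n + 1 by omega)]
        have hstep : 1 / ((n : ℝ) + 1) ^ 2 ≤ 1 / (n : ℝ) - 1 / ((n : ℝ) + 1) := by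
          have e1 : 1 / (n : ℝ) - 1 / ((n : ℝ) + 1) = 1 / ((n : ℝ) * ((n : ℝ) + 1)) := by
            field_simp
            ring
          rw [e1, div_le_div_iff₀ (by positivity) (by positivity)]
          nlinarith
        push_cast
        linarith
  intro n
  rcases Nat.eq_zero_or_pos n with h0 | h0
  · simp [h0]
  · have h1 := key n h0
    have hx0 : (0 : ℝ) < (n : ℝ) := by exact_mod_cast h0
    have : (0 : ℝ) < 1 / (n : ℝ) := by positivity
    linarith


/-- Time-domain validity of bounded online e-values: if `(e_n)_{n≥1}` are
nonnegative, adapted to a filtration `(F_n)`, uniformly bounded by `C`, and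
`E[e_n | F_{n-1}] ≤ 1` a.s. for every `n ≥ 1`, then almost surely
`limsup_n (1/n) ∑_{i=1}^n e_i ≤ 1`. -/
theorem online_evalues_time_validity
    {Ω : Type*} {mΩ : MeasurableSpace Ω} (μ : Measure Ω) [IsProbabilityMeasure μ]
    (ℱ : Filtration ℕ mΩ) (e : ℕ → Ω → ℝ)
    (hadapted : Adapted ℱ e)
    (hnonneg : ∀ n ω, 0 ≤ e n ω)
    (C : ℝ) (hbdd : ∀ n ω, e n ω ≤ C)
    (hcond : ∀ n, 1 ≤ n → μ[e n | ℱ (n - 1)] ≤ᵐ[μ] fun _ => 1) :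
    ∀ᵐ ω ∂μ, limsup (fun n : ℕ =>
      (1 / (n : ℝ)) * ∑ i ∈ Finset.Icc 1 n, e i ω) atTop ≤ 1 := by
  -- Ω is nonempty and C ≥ 0
  have hΩ : Nonempty Ω := by
    by_contra h
    rw [not_nonempty_iff] at h
    have h1 : μ Set.univ = 1 := measure_univ
    rw [Set.univ_eq_empty_iff.mpr h, measure_empty] at h1
    exact zero_ne_one h1
  have hC : 0 ≤ C := (hnonneg 1 hΩ.some).trans (hbdd 1 hΩ.some)
  -- conditional means and differences
  set c : ℕ → Ω → ℝ := fun n => μ[e n|ℱ (n - 1)] with hc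
  set d : ℕ → Ω → ℝ := fun n ω => e n ω - c n ω with hd
  have hei : ∀ n, Integrable (e n) μ := by
    intro n
    refine (memLp_top_of_bound ((hadapted.stronglyAdapted n).mono (ℱ.le n)).aestronglyMeasurable C
      (Eventually.of_forall fun ω => ?_)).integrable le_top
    rw [Real.norm_eq_abs, abs_le]
    exact ⟨by nlinarith [hnonneg n ω], hbdd n ω⟩
  have hci : ∀ n, Integrable (c n) μ := fun n => integrable_condExp
  have hdi : ∀ n, Integrable (d n) μ := fun n => (hei n).sub (hci n)
  have hc01 : ∀ n, ∀ᵐ ω ∂μ, 0 ≤ c n ω ∧ c n ω ≤ C := by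
    intro n
    have h1 : (0 : Ω → ℝ) ≤ᵐ[μ] c n := condExp_nonneg (Eventually.of_forall (hnonneg n))
    have h2 : c n ≤ᵐ[μ] fun _ => C := by
      have h3 := condExp_mono (m := ℱ (n - 1)) (μ := μ) (hei n) (integrable_const C)
        (Eventually.of_forall (hbdd n))
      rwa [condExp_const (ℱ.le (n - 1))] at h3
    filter_upwards [h1, h2] with ω hω1 hω2
    exact ⟨hω1, hω2⟩
  have hd_bdd : ∀ n, ∀ᵐ ω ∂μ, |d n ω| ≤ C := by
    intro n
    filter_upwards [hc01 n] with ω hω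
    rw [abs_le]
    constructor
    · simp only [hd]
      nlinarith [hnonneg n ω, hω.2]
    · simp only [hd]
      nlinarith [hbdd n ω, hω.1]
  have hd_meas : ∀ n, StronglyMeasurable[ℱ n] (d n) := fun n =>
    (hadapted.stronglyAdapted n).sub (stronglyMeasurable_condExp.mono (ℱ.mono (Nat.sub_le n 1)))
  have hd0 : ∀ n : ℕ, μ[d (n + 1)|ℱ n] =ᵐ[μ] 0 := by
    intro n
    have h1 : μ[d (n + 1)|ℱ n] =ᵐ[μ] μ[e (n + 1)|ℱ n] - μ[c (n + 1)|ℱ n] :=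
      condExp_sub (hei (n + 1)) (hci (n + 1)) _
    have h2 : μ[c (n + 1)|ℱ n] = c (n + 1) :=
      condExp_of_stronglyMeasurable (ℱ.le n) stronglyMeasurable_condExp (hci (n + 1))
    filter_upwards [h1] with ω hω
    rw [hω, Pi.sub_apply, h2]
    show c (n + 1) ω - c (n + 1) ω = 0
    ring
  -- the scaled difference martingale
  set N : ℕ → Ω → ℝ := fun n ω => ∑ i ∈ Finset.Icc 1 n, d i ω / i with hN
  have hNsucc : ∀ (n : ℕ) ω, N (n + 1) ω = N n ω + d (n + 1) ω / ((n + 1 : ℕ) : ℝ) := by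
    intro n ω
    exact Finset.sum_Icc_succ_top (by omega) _
  have hNadp : StronglyAdapted ℱ N := by
    intro n
    show StronglyMeasurable[ℱ n] fun ω => ∑ i ∈ Finset.Icc 1 n, d i ω / i
    simp only [div_eq_mul_inv]
    exact Finset.stronglyMeasurable_fun_sum _ fun i hi =>
      ((hd_meas i).mono (ℱ.mono (Finset.mem_Icc.mp hi).2)).mul_const _
  have hNint : ∀ n, Integrable (N n) μ := fun n =>
    integrable_finset_sum _ fun i _ => (hdi i).div_const _
  have hd0' : ∀ n : ℕ, μ[fun ω => d (n + 1) ω / ((n + 1 : ℕ) : ℝ)|ℱ n] =ᵐ[μ] 0 := by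
    intro n
    have hsmul : (fun ω => d (n + 1) ω / ((n + 1 : ℕ) : ℝ))
        = (((n + 1 : ℕ) : ℝ))⁻¹ • d (n + 1) := by
      funext ω
      simp [div_eq_inv_mul]
    rw [hsmul]
    refine (condExp_smul _ _ _).trans ?_
    filter_upwards [hd0 n] with ω hω
    simp only [Pi.smul_apply, hω, Pi.zero_apply, smul_zero]
  have hNmart : Martingale N ℱ μ := by
    refine martingale_nat hNadp hNint fun n => ?_
    have heq : N (n + 1) = N n + fun ω => d (n + 1) ω / ((n + 1 : ℕ) : ℝ) := by
      funext ω
      exact hNsucc n ω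
    have h1 : μ[N (n + 1)|ℱ n] =ᵐ[μ]
        μ[N n|ℱ n] + μ[fun ω => d (n + 1) ω / ((n + 1 : ℕ) : ℝ)|ℱ n] := by
      rw [heq]
      exact condExp_add (hNint n) ((hdi (n + 1)).div_const _) _
    have h2 : μ[N n|ℱ n] = N n := condExp_of_stronglyMeasurable (ℱ.le n) (hNadp n) (hNint n)
    filter_upwards [h1, hd0' n] with ω hω1 hω3
    rw [hω1, Pi.add_apply, h2, hω3, Pi.zero_apply, add_zero]
  -- a.e. bound on N
  have hNbdd : ∀ n, ∀ᵐ ω ∂μ, |N n ω| ≤ n * C := by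
    intro n
    filter_upwards [ae_all_iff.mpr hd_bdd] with ω hω
    calc |N n ω| ≤ ∑ i ∈ Finset.Icc 1 n, |d i ω / i| := Finset.abs_sum_le_sum_abs _ _
      _ ≤ ∑ _i ∈ Finset.Icc 1 n, C := by
          refine Finset.sum_le_sum fun i hi => ?_
          have h1 : 1 ≤ i := (Finset.mem_Icc.mp hi).1
          have hipos : (1 : ℝ) ≤ (i : ℝ) := by exact_mod_cast h1
          rw [abs_div, abs_of_nonneg (by positivity : (0 : ℝ) ≤ (i : ℝ))]
          exact le_trans (div_le_self (abs_nonneg _) hipos) (hω i)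
      _ ≤ n * C := by
          rw [Finset.sum_const, Nat.card_Icc, nsmul_eq_mul]
          simp
  have hNtop : ∀ n, MemLp (N n) ⊤ μ := by
    intro n
    refine memLp_top_of_bound ((hNadp n).mono (ℱ.le n)).aestronglyMeasurable ((n : ℝ) * C) ?_
    filter_upwards [hNbdd n] with ω hω
    rwa [Real.norm_eq_abs]
  have hNsq : ∀ n, Integrable (fun ω => (N n ω) ^ 2) μ := fun n =>
    ((hNtop n).mono_exponent le_top).integrable_sq
  -- second moment bound by induction
  have hsum2 : ∀ n : ℕ, ∫ ω, (N n ω) ^ 2 ∂μ ≤ C ^ 2 * ∑ i ∈ Finset.Icc 1 n, (1 / (i : ℝ) ^ 2) := by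
    intro n
    induction n with
    | zero =>
      rw [show Finset.Icc 1 0 = (∅ : Finset ℕ) from Finset.Icc_eq_empty (by omega)]
      simp [hN]
    | succ n ih =>
      have hdiv : Integrable (fun ω => d (n + 1) ω / ((n + 1 : ℕ) : ℝ)) μ :=
        (hdi (n + 1)).div_const _
      have hdbd' : ∀ᵐ ω ∂μ, ‖d (n + 1) ω / ((n + 1 : ℕ) : ℝ)‖ ≤ C / ((n + 1 : ℕ) : ℝ) := by
        filter_upwards [hd_bdd (n + 1)] with ω hω
        rw [Real.norm_eq_abs, abs_div, abs_of_nonneg (by positivity : (0 : ℝ) ≤ ((n + 1 : ℕ) : ℝ))]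
        gcongr
      have hdtop : MemLp (fun ω => d (n + 1) ω / ((n + 1 : ℕ) : ℝ)) ⊤ μ :=
        memLp_top_of_bound hdiv.aestronglyMeasurable _ hdbd'
      have hint3 : Integrable (fun ω => (d (n + 1) ω / ((n + 1 : ℕ) : ℝ)) ^ 2) μ :=
        (hdtop.mono_exponent le_top).integrable_sq
      have hint2 : Integrable (fun ω => N n ω * (d (n + 1) ω / ((n + 1 : ℕ) : ℝ))) μ :=
        hdiv.bdd_mul ((hNadp n).mono (ℱ.le n)).aestronglyMeasurable
          (by filter_upwards [hNbdd n] with ω hω; rwa [Real.norm_eq_abs])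
      have hcross : ∫ ω, N n ω * (d (n + 1) ω / ((n + 1 : ℕ) : ℝ)) ∂μ = 0 :=
        integral_mul_eq_zero_of_condexp_eq_zero (ℱ.le n) (hNadp n) hint2 hdiv (hd0' n)
      have hexpand : ∫ ω, (N (n + 1) ω) ^ 2 ∂μ
          = ∫ ω, (N n ω) ^ 2 ∂μ + 2 * ∫ ω, N n ω * (d (n + 1) ω / ((n + 1 : ℕ) : ℝ)) ∂μ
            + ∫ ω, (d (n + 1) ω / ((n + 1 : ℕ) : ℝ)) ^ 2 ∂μ := by
        have hfun : (fun ω => (N (n + 1) ω) ^ 2) = fun ω =>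
            (N n ω) ^ 2 + 2 * (N n ω * (d (n + 1) ω / ((n + 1 : ℕ) : ℝ)))
              + (d (n + 1) ω / ((n + 1 : ℕ) : ℝ)) ^ 2 := by
          funext ω
          rw [hNsucc n ω]
          ring
        have hint12 : Integrable
            (fun ω => N n ω ^ 2 + 2 * (N n ω * (d (n + 1) ω / ((n + 1 : ℕ) : ℝ)))) μ :=
          (hNsq n).add (hint2.const_mul 2)
        rw [hfun, integral_add hint12 hint3,
          integral_add (hNsq n) (hint2.const_mul 2), MeasureTheory.integral_const_mul]
      have hlast : ∫ ω, (d (n + 1) ω / ((n + 1 : ℕ) : ℝ)) ^ 2 ∂μ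
          ≤ C ^ 2 * (1 / ((n + 1 : ℕ) : ℝ) ^ 2) := by
        have hae : ∀ᵐ ω ∂μ, (d (n + 1) ω / ((n + 1 : ℕ) : ℝ)) ^ 2
            ≤ C ^ 2 * (1 / ((n + 1 : ℕ) : ℝ) ^ 2) := by
          filter_upwards [hd_bdd (n + 1)] with ω hω
          have h1 : (d (n + 1) ω) ^ 2 ≤ C ^ 2 := sq_le_sq' (abs_le.mp hω).1 (abs_le.mp hω).2
          rw [div_pow, mul_one_div]
          gcongr
        calc ∫ ω, (d (n + 1) ω / ((n + 1 : ℕ) : ℝ)) ^ 2 ∂μ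
            ≤ ∫ _ω, C ^ 2 * (1 / ((n + 1 : ℕ) : ℝ) ^ 2) ∂μ :=
              integral_mono_ae hint3 (integrable_const _) hae
          _ = C ^ 2 * (1 / ((n + 1 : ℕ) : ℝ) ^ 2) := by simp
      rw [Finset.sum_Icc_succ_top (show 1 ≤ n + 1 by omega), mul_add]
      rw [hexpand, hcross, mul_zero, add_zero]
      exact add_le_add ih hlast
  -- L¹ boundedness
  have habs : ∀ n, ∫ ω, |N n ω| ∂μ ≤ (1 + 2 * C ^ 2) / 2 := by
    intro n
    have hhalf : Integrable (fun ω => (1 + (N n ω) ^ 2) / 2) μ :=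
      ((integrable_const (1 : ℝ)).add (hNsq n)).div_const 2
    have h1 : ∫ ω, |N n ω| ∂μ ≤ ∫ ω, (1 + (N n ω) ^ 2) / 2 ∂μ := by
      refine integral_mono_ae (hNint n).abs hhalf (Eventually.of_forall fun ω => ?_)
      nlinarith [sq_nonneg (|N n ω| - 1), sq_abs (N n ω)]
    have h2 : ∫ ω, (1 + (N n ω) ^ 2) / 2 ∂μ = (1 + ∫ ω, (N n ω) ^ 2 ∂μ) / 2 := by
      rw [integral_div, integral_add (integrable_const 1) (hNsq n)]
      simp
    have h3 : ∫ ω, (N n ω) ^ 2 ∂μ ≤ 2 * C ^ 2 := by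
      refine le_trans (hsum2 n) ?_
      have h4 := sum_inv_sq_le_two n
      nlinarith [sq_nonneg C]
    rw [h2] at h1
    linarith
  have hbddN : ∀ n, eLpNorm (N n) 1 μ ≤ ENNReal.ofReal ((1 + 2 * C ^ 2) / 2) := by
    intro n
    rw [eLpNorm_one_eq_lintegral_enorm, ← ofReal_integral_norm_eq_lintegral_enorm (hNint n)]
    apply ENNReal.ofReal_le_ofReal
    calc ∫ ω, ‖N n ω‖ ∂μ = ∫ ω, |N n ω| ∂μ := by simp [Real.norm_eq_abs]
      _ ≤ _ := habs n
  have hconv : ∀ᵐ ω ∂μ, ∃ l, Tendsto (fun n => N n ω) atTop (𝓝 l) :=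
    hNmart.submartingale.exists_ae_tendsto_of_bdd hbddN
  have hcond' : ∀ᵐ ω ∂μ, ∀ i, 1 ≤ i → c i ω ≤ 1 := by
    rw [ae_all_iff]
    intro i
    rcases Nat.lt_or_ge i 1 with h | h
    · exact Eventually.of_forall fun ω hi => absurd hi (by omega)
    · filter_upwards [hcond i h] with ω hω _
      exact hω
  filter_upwards [hconv, hcond'] with ω hωc hω1
  obtain ⟨l, hl⟩ := hωc
  have hkron : Tendsto (fun n : ℕ => (1 / (n : ℝ)) * ∑ i ∈ Finset.Icc 1 n, d i ω)
      atTop (𝓝 0) := kronecker_aux hl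
  have hle : ∀ n : ℕ, (1 / (n : ℝ)) * ∑ i ∈ Finset.Icc 1 n, e i ω
      ≤ (1 / (n : ℝ)) * ∑ i ∈ Finset.Icc 1 n, d i ω + 1 := by
    intro n
    rcases Nat.eq_zero_or_pos n with h | h
    · subst h
      simp
    · have hsumle : ∑ i ∈ Finset.Icc 1 n, e i ω ≤ (∑ i ∈ Finset.Icc 1 n, d i ω) + n := by
        have hterm : ∀ i ∈ Finset.Icc 1 n, e i ω ≤ d i ω + 1 := by
          intro i hi
          have h5 := hω1 i (Finset.mem_Icc.mp hi).1
          simp only [hd]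
          linarith
        calc ∑ i ∈ Finset.Icc 1 n, e i ω ≤ ∑ i ∈ Finset.Icc 1 n, (d i ω + 1) :=
              Finset.sum_le_sum hterm
          _ = (∑ i ∈ Finset.Icc 1 n, d i ω) + n := by
              rw [Finset.sum_add_distrib, Finset.sum_const, Nat.card_Icc, nsmul_eq_mul]
              simp
      have hn0 : (0 : ℝ) < n := by exact_mod_cast h
      have hmul := mul_le_mul_of_nonneg_left hsumle (by positivity : (0 : ℝ) ≤ 1 / (n : ℝ))
      calc (1 / (n : ℝ)) * ∑ i ∈ Finset.Icc 1 n, e i ω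
          ≤ (1 / (n : ℝ)) * ((∑ i ∈ Finset.Icc 1 n, d i ω) + n) := hmul
        _ = (1 / (n : ℝ)) * ∑ i ∈ Finset.Icc 1 n, d i ω + 1 := by
            field_simp
  have hg : Tendsto (fun n : ℕ => (1 / (n : ℝ)) * ∑ i ∈ Finset.Icc 1 n, d i ω + 1)
      atTop (𝓝 1) := by
    have h6 := hkron.add_const 1
    rwa [zero_add] at h6
  have hub : IsBoundedUnder (· ≤ ·) atTop
      (fun n : ℕ => (1 / (n : ℝ)) * ∑ i ∈ Finset.Icc 1 n, d i ω + 1) := hg.isBoundedUnder_le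
  have hcb : IsCoboundedUnder (· ≤ ·) atTop
      (fun n : ℕ => (1 / (n : ℝ)) * ∑ i ∈ Finset.Icc 1 n, e i ω) := by
    refine (isBoundedUnder_of ⟨0, fun n => ?_⟩ :
      IsBoundedUnder (· ≥ ·) atTop _).isCoboundedUnder_le
    have : (0 : ℝ) ≤ ∑ i ∈ Finset.Icc 1 n, e i ω :=
      Finset.sum_nonneg fun i _ => hnonneg i ω
    positivity
  have hfinal := limsup_le_limsup (Eventually.of_forall hle) hcb hub
  rwa [hg.limsup_eq] at hfinal
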